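/- For any election system E (a function mapping a pair (candidate set, vote list) to a subset of the candidate set), the decision problems E-DC-RPC-TP-NUW and E-DC-PC-TP-NUW are equal as sets: for every (C,V,p) with p ∈ C, there exists a partition (C₁,C₂) of C under which p is not a winner of the two-stage RPC-TP election if and only if there exists a partition (C₁,C₂) under which p is not a winner of the two-stage PC-TP election. -/
import Mathlib


/-- for any election system `E` (mapping each candidate subset,
with the fixed votes, to a winner subset), the decision problems
`E`-DC-RPC-TP-NUW and `E`-DC-PC-TP-NUW are equal as sets: there is a partition
`(C₁,C₂)` of `C` with `p` not a winner of the two-stage RPC-TP election, i.e.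
`p ∉ E (E C₁ ∪ E C₂)` (note that if `p` is eliminated in the first round then
`p` is not in the final candidate set, hence not a winner of the final round),
iff there is a partition with `p` not a winner of the two-stage PC-TP election,
i.e. `p ∉ E (E C₁ ∪ C₂)`. -/
theorem dc_rpc_tp_nuw_eq_dc_pc_tp_nuw {α : Type*} [DecidableEq α]
    (E : Finset α → Finset α) (hE : ∀ C' : Finset α, E C' ⊆ C')
    (C : Finset α) (p : α) (hp : p ∈ C) :
    (∃ C₁ C₂ : Finset α, C₁ ∪ C₂ = C ∧ C₁ ∩ C₂ = ∅ ∧ p ∉ E (E C₁ ∪ E C₂)) ↔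
    (∃ C₁ C₂ : Finset α, C₁ ∪ C₂ = C ∧ C₁ ∩ C₂ = ∅ ∧ p ∉ E (E C₁ ∪ C₂)) := by
  -- Both sides are equivalent to `∃ D ⊆ C, p ∈ D ∧ p ∉ E D`.
  have back : ∀ D : Finset α, D ⊆ C → p ∈ D → p ∉ E D →
      (D ∪ (C \ D) = C ∧ D ∩ (C \ D) = ∅ ∧ p ∉ E D ∪ (C \ D)) := by
    intro D hDC hpD hpED
    refine ⟨Finset.union_sdiff_of_subset hDC, Finset.inter_sdiff_self _ _, ?_⟩
    simp only [Finset.mem_union, Finset.mem_sdiff]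
    rintro (h | ⟨_, h⟩)
    · exact hpED h
    · exact h hpD
  have hrpc : (∃ C₁ C₂ : Finset α, C₁ ∪ C₂ = C ∧ C₁ ∩ C₂ = ∅ ∧
      p ∉ E (E C₁ ∪ E C₂)) ↔ ∃ D, D ⊆ C ∧ p ∈ D ∧ p ∉ E D := by
    constructor
    · rintro ⟨C₁, C₂, hu, -, hw⟩
      by_cases hmem : p ∈ E C₁ ∪ E C₂
      · refine ⟨E C₁ ∪ E C₂, ?_, hmem, hw⟩
        rw [← hu]
        exact Finset.union_subset_union (hE C₁) (hE C₂)
      · rw [Finset.mem_union] at hmem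
        push_neg at hmem
        have : p ∈ C₁ ∪ C₂ := hu ▸ hp
        rcases Finset.mem_union.mp this with h | h
        · exact ⟨C₁, hu ▸ Finset.subset_union_left, h, hmem.1⟩
        · exact ⟨C₂, hu ▸ Finset.subset_union_right, h, hmem.2⟩
    · rintro ⟨D, hDC, hpD, hpED⟩
      obtain ⟨h1, h2, h3⟩ := back D hDC hpD hpED
      refine ⟨D, C \ D, h1, h2, fun hc => ?_⟩
      have := hE _ hc
      have : p ∈ E D ∪ (C \ D) :=
        Finset.union_subset_union_right (hE _) this
      exact h3 this
  have hpc : (∃ C₁ C₂ : Finset α, C₁ ∪ C₂ = C ∧ C₁ ∩ C₂ = ∅ ∧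
      p ∉ E (E C₁ ∪ C₂)) ↔ ∃ D, D ⊆ C ∧ p ∈ D ∧ p ∉ E D := by
    constructor
    · rintro ⟨C₁, C₂, hu, -, hw⟩
      by_cases hmem : p ∈ E C₁ ∪ C₂
      · refine ⟨E C₁ ∪ C₂, ?_, hmem, hw⟩
        rw [← hu]
        exact Finset.union_subset_union (hE C₁) (Finset.Subset.refl _)
      · rw [Finset.mem_union] at hmem
        push_neg at hmem
        have : p ∈ C₁ ∪ C₂ := hu ▸ hp
        rcases Finset.mem_union.mp this with h | h
        · exact ⟨C₁, hu ▸ Finset.subset_union_left, h, hmem.1⟩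
        · exact absurd h hmem.2
    · rintro ⟨D, hDC, hpD, hpED⟩
      obtain ⟨h1, h2, h3⟩ := back D hDC hpD hpED
      refine ⟨D, C \ D, h1, h2, fun hc => ?_⟩
      have := hE _ hc
      exact h3 this
  rw [hrpc, hpc]
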